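/- Let psi be a 3 x 2 matrix over A = K[u,v], set g_i = (-1)^i det(psi with row i deleted) for i = 0,1,2, and suppose the ideal (g0,g1,g2) of A has height 2. Then every w in A^3 with psi^T w = 0 (i.e. w is orthogonal to both columns of psi) is of the form w = lambda · (g0,g1,g2) for some lambda in A. -/

import Mathlib

open MvPolynomial Matrix

/-- The height (codimension) of an ideal: the infimum of the heights of the primes
containing it. -/
noncomputable def idealHeight {A : Type*} [CommRing A] (I : Ideal A) : ℕ∞ :=
  ⨅ (P : PrimeSpectrum A) (_ : I ≤ P.asIdeal), Order.height P

section Aux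

variable {A : Type*} [CommRing A] [IsDomain A]

/-- In a domain, if an ideal has height ≥ 2, then it is not the zero ideal. -/
lemma idealHeight_ne_two_of_bot (I : Ideal A) (hI : I ≤ ⊥) : idealHeight I ≠ 2 := by
  intro h
  have hle : idealHeight I ≤ Order.height (⟨⊥, Ideal.bot_prime⟩ : PrimeSpectrum A) := by
    unfold idealHeight
    exact iInf₂_le (⟨⊥, Ideal.bot_prime⟩ : PrimeSpectrum A) hI
  have h0 : Order.height (⟨⊥, Ideal.bot_prime⟩ : PrimeSpectrum A) = 0 := by
    rw [Order.height_eq_zero]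
    intro Q _
    exact (bot_le : (⊥ : Ideal A) ≤ Q.asIdeal)
  rw [h, h0] at hle
  exact absurd hle (by decide)

/-- In a UFD, the prime generated by a prime element has height at most 1; hence an ideal
contained in it cannot have height 2. -/
lemma idealHeight_ne_two_of_prime [WfDvdMonoid A] [UniqueFactorizationMonoid A]
    (I : Ideal A) (π : A) (hπ : Prime π) (hle : I ≤ Ideal.span {π}) :
    idealHeight I ≠ 2 := by
  intro h
  set P : PrimeSpectrum A := ⟨Ideal.span {π}, (Ideal.span_singleton_prime hπ.ne_zero).mpr hπ⟩
  have hle2 : idealHeight I ≤ Order.height P := by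
    unfold idealHeight
    exact iInf₂_le P hle
  -- every prime strictly below (π) is zero
  have key : ∀ Q : PrimeSpectrum A, Q < P → Q.asIdeal = ⊥ := by
    intro Q hQ
    have hQle : Q.asIdeal ≤ Ideal.span {π} := le_of_lt hQ
    have hπQ : π ∉ Q.asIdeal := by
      intro hmem
      have : Ideal.span {π} ≤ Q.asIdeal := (Ideal.span_singleton_le_iff_mem _).mpr hmem
      exact absurd (le_antisymm hQle this) (ne_of_lt hQ)
    ext f
    simp only [Ideal.mem_bot]
    constructor
    · intro hf
      by_contra hf0
      obtain ⟨n, b, hnb, rfl⟩ := WfDvdMonoid.max_power_factor hf0 hπ.irreducible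
      rcases Q.isPrime.mem_or_mem hf with hmem | hmem
      · exact hπQ (Q.isPrime.mem_of_pow_mem n hmem)
      · exact hnb (Ideal.mem_span_singleton.mp (hQle hmem))
    · rintro rfl; exact Q.asIdeal.zero_mem
  have hht1 : Order.height P ≤ 1 := by
    apply Order.height_le
    intro p hlast
    by_contra hlen
    push_neg at hlen
    have hlen' : 1 < p.length := by exact_mod_cast hlen
    have h1 : p.toFun ⟨p.length - 1, by omega⟩ < P := by
      rw [← hlast]
      exact p.strictMono (by simp [Fin.lt_def]; omega)
    have h2 : p.toFun ⟨p.length - 2, by omega⟩ < p.toFun ⟨p.length - 1, by omega⟩ :=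
      p.strictMono (by simp [Fin.lt_def]; omega)
    have hb1 : (p.toFun ⟨p.length - 1, by omega⟩).asIdeal = ⊥ := key _ h1
    have hb2 : (p.toFun ⟨p.length - 2, by omega⟩).asIdeal = ⊥ :=
      key _ (lt_trans h2 h1)
    have : (p.toFun ⟨p.length - 2, by omega⟩).asIdeal <
        (p.toFun ⟨p.length - 1, by omega⟩).asIdeal := h2
    rw [hb1, hb2] at this
    exact absurd this (lt_irrefl _)
  rw [h] at hle2
  exact absurd (hle2.trans hht1) (by decide)

end Aux

/-- Let `ψ` be a `3 × 2` matrix over `A = K[u,v]` whose signed maximal minors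
`gᵢ = (-1)ⁱ det(ψ with row i deleted)` generate a height-2 ideal.  Then every `w ∈ A³`
with `ψᵀ w = 0` is a multiple of `(g₀,g₁,g₂)`. -/
theorem kernel_of_transpose_spanned_by_minors
    (K : Type*) [Field K]
    (psi : Matrix (Fin 3) (Fin 2) (MvPolynomial (Fin 2) K))
    (g : Fin 3 → MvPolynomial (Fin 2) K)
    (hg : ∀ i : Fin 3, g i = (-1) ^ (i : ℕ) * (psi.submatrix i.succAbove id).det)
    (hht : idealHeight (Ideal.span (Set.range g)) = 2) :
    ∀ w : Fin 3 → MvPolynomial (Fin 2) K, psiᵀ.mulVec w = 0 →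
      ∃ lam : MvPolynomial (Fin 2) K, w = lam • g := by
  -- explicit formulas for the minors
  have e00 : (0:Fin 3).succAbove (0:Fin 2) = 1 := rfl
  have e01 : (0:Fin 3).succAbove (1:Fin 2) = 2 := rfl
  have e10 : (1:Fin 3).succAbove (0:Fin 2) = 0 := rfl
  have e11 : (1:Fin 3).succAbove (1:Fin 2) = 2 := rfl
  have e20 : (2:Fin 3).succAbove (0:Fin 2) = 0 := rfl
  have e21 : (2:Fin 3).succAbove (1:Fin 2) = 1 := rfl
  have hG0 : g 0 = psi 1 0 * psi 2 1 - psi 1 1 * psi 2 0 := by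
    rw [hg 0, Matrix.det_fin_two]
    have hv : ((0 : Fin 3) : ℕ) = 0 := rfl
    rw [hv]
    simp only [Matrix.submatrix_apply, id, e00, e01]
    ring
  have hG1 : g 1 = psi 0 1 * psi 2 0 - psi 0 0 * psi 2 1 := by
    rw [hg 1, Matrix.det_fin_two]
    have hv : ((1 : Fin 3) : ℕ) = 1 := rfl
    rw [hv]
    simp only [Matrix.submatrix_apply, id, e10, e11]
    ring
  have hG2 : g 2 = psi 0 0 * psi 1 1 - psi 0 1 * psi 1 0 := by
    rw [hg 2, Matrix.det_fin_two]
    have hv : ((2 : Fin 3) : ℕ) = 2 := rfl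
    rw [hv]
    simp only [Matrix.submatrix_apply, id, e20, e21]
    ring
  intro w hw
  -- the two linear relations
  have hE0 : psi 0 0 * w 0 + psi 1 0 * w 1 + psi 2 0 * w 2 = 0 := by
    have := congrFun hw 0
    simpa [Matrix.mulVec, dotProduct, Fin.sum_univ_three, Matrix.transpose_apply]
      using this
  have hE1 : psi 0 1 * w 0 + psi 1 1 * w 1 + psi 2 1 * w 2 = 0 := by
    have := congrFun hw 1
    simpa [Matrix.mulVec, dotProduct, Fin.sum_univ_three, Matrix.transpose_apply]
      using this
  -- cross-product identities: w is proportional to g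
  have h01 : w 0 * g 1 = w 1 * g 0 := by
    rw [hG0, hG1]
    linear_combination (psi 2 0) * hE1 - (psi 2 1) * hE0
  have h02 : w 0 * g 2 = w 2 * g 0 := by
    rw [hG0, hG2]
    linear_combination (psi 1 1) * hE0 - (psi 1 0) * hE1
  have h12 : w 1 * g 2 = w 2 * g 1 := by
    rw [hG1, hG2]
    linear_combination (psi 0 0) * hE1 - (psi 0 1) * hE0
  have hprop : ∀ i j : Fin 3, w i * g j = w j * g i := by
    intro i j
    fin_cases i <;> fin_cases j <;>
      first
        | rfl
        | exact h01 | exact h01.symm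
        | exact h02 | exact h02.symm
        | exact h12 | exact h12.symm
  -- some minor is nonzero
  have hne : ∃ i, g i ≠ 0 := by
    by_contra h
    push_neg at h
    refine idealHeight_ne_two_of_bot (Ideal.span (Set.range g)) ?_ hht
    rw [Ideal.span_le]
    rintro x ⟨i, rfl⟩
    simp [h i]
  obtain ⟨i₀, hi₀⟩ := hne
  -- no prime divides all the minors
  have hnoprime : ∀ π : MvPolynomial (Fin 2) K, Prime π → ¬ (∀ i, π ∣ g i) := by
    intro π hπ hdvd
    refine idealHeight_ne_two_of_prime (Ideal.span (Set.range g)) π hπ ?_ hht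
    rw [Ideal.span_le]
    rintro x ⟨i, rfl⟩
    exact Ideal.mem_span_singleton.mpr (hdvd i)
  letI : NormalizationMonoid (MvPolynomial (Fin 2) K) := UniqueFactorizationMonoid.normalizationMonoid.toNormalizationMonoid
  letI : NormalizedGCDMonoid (MvPolynomial (Fin 2) K) := UniqueFactorizationMonoid.toNormalizedGCDMonoid _
  set d : MvPolynomial (Fin 2) K := gcd (g 0) (gcd (g 1) (g 2)) with hd
  have hdg : ∀ i : Fin 3, d ∣ g i := by
    intro i
    fin_cases i
    · exact gcd_dvd_left _ _
    · exact (gcd_dvd_right _ _).trans (gcd_dvd_left _ _)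
    · exact (gcd_dvd_right _ _).trans (gcd_dvd_right _ _)
  have hdu : IsUnit d := by
    by_contra hdu
    have hd0 : d ≠ 0 := by
      intro h0
      apply hi₀
      rw [hd] at h0
      have h1 := (gcd_eq_zero_iff _ _).mp h0
      have h2 := (gcd_eq_zero_iff _ _).mp h1.2
      fin_cases i₀
      · exact h1.1
      · exact h2.1
      · exact h2.2
    obtain ⟨π, hπirr, hπd⟩ := WfDvdMonoid.exists_irreducible_factor hdu hd0
    exact hnoprime π (UniqueFactorizationMonoid.irreducible_iff_prime.mp hπirr)
      (fun i => hπd.trans (hdg i))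
  -- g i₀ divides w i₀ * gcd = w i₀ up to a unit
  have hkey : ∀ j, g i₀ ∣ w i₀ * g j := by
    intro j
    exact ⟨w j, by rw [hprop i₀ j]; ring⟩
  have hdvd12 : g i₀ ∣ w i₀ * gcd (g 1) (g 2) :=
    (dvd_gcd (hkey 1) (hkey 2)).trans (gcd_mul_left' (w i₀) (g 1) (g 2)).dvd
  have hdvdd : g i₀ ∣ w i₀ * d :=
    (dvd_gcd (hkey 0) hdvd12).trans (gcd_mul_left' (w i₀) (g 0) (gcd (g 1) (g 2))).dvd
  have hwdvd : g i₀ ∣ w i₀ := (hdu.dvd_mul_right).mp hdvdd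
  obtain ⟨c, hc⟩ := hwdvd
  refine ⟨c, funext fun j => ?_⟩
  have : w j = c * g j := by
    apply mul_left_cancel₀ hi₀
    linear_combination (g j) * hc - hprop i₀ j
  simpa [Pi.smul_apply, smul_eq_mul] using this
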